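/- Consider a tree-based model f(x) = Σ_{m=1}^M f_m 1_{L_m}(x) with leaves L_m, and the Leaf value function v(S) = Σ_{m ∈ C(S,x)} w_m f_m P(X ∈ L_m | X_S ∈ L_m^S) (no normalization, w_m = 1). Then the Shapley value of feature i decomposes as a sum over compatible leaves: φ_{X_i} = Σ_m φ_{X_i}^m, where φ_{X_i}^m = (1/p) Σ_{S' ⊆ S_m\{i}} [C(p−1,|S'|)⁻¹ + Σ_{∅≠Z ⊆ complement of S_m∪{i}} C(p−1,|Z|+|S'|)⁻¹] · f_m · [P(L_m | X_{S'∪{i}} ∈ L_m^{S'∪{i}}) − P(L_m | X_{S'} ∈ L_m^{S'})], and S_m is the set of split variables of leaf m. -/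
import Mathlib


open MeasureTheory ProbabilityTheory

attribute [local instance] Classical.propDecidable

private lemma sum_powerset_union_disjoint {α β : Type*} [DecidableEq α] [AddCommMonoid β]
    {A B : Finset α} (h : Disjoint A B) (f : Finset α → β) :
    ∑ S ∈ (A ∪ B).powerset, f S = ∑ S' ∈ A.powerset, ∑ Z ∈ B.powerset, f (S' ∪ Z) := by
  rw [← Finset.sum_product']
  refine Finset.sum_nbij' (fun S => (S ∩ A, S ∩ B)) (fun q => q.1 ∪ q.2) ?_ ?_ ?_ ?_ ?_
  · intro S hS
    simp only [Finset.mem_product, Finset.mem_powerset]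
    exact ⟨Finset.inter_subset_right, Finset.inter_subset_right⟩
  · intro q hq
    simp only [Finset.mem_product, Finset.mem_powerset] at hq ⊢
    exact Finset.union_subset_union hq.1 hq.2
  · intro S hS
    simp only [Finset.mem_powerset] at hS
    show S ∩ A ∪ S ∩ B = S
    rw [← Finset.inter_union_distrib_left, Finset.inter_eq_left.2 hS]
  · intro q hq
    simp only [Finset.mem_product, Finset.mem_powerset] at hq
    have e1 : (q.1 ∪ q.2) ∩ A = q.1 := by
      ext a
      simp only [Finset.mem_inter, Finset.mem_union]
      constructor
      · rintro ⟨h1 | h2, hA⟩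
        · exact h1
        · exact absurd hA (Finset.disjoint_right.1 h (hq.2 h2))
      · exact fun ha => ⟨Or.inl ha, hq.1 ha⟩
    have e2 : (q.1 ∪ q.2) ∩ B = q.2 := by
      ext a
      simp only [Finset.mem_inter, Finset.mem_union]
      constructor
      · rintro ⟨h1 | h2, hB⟩
        · exact absurd hB (Finset.disjoint_left.1 h (hq.1 h1))
        · exact h2
      · exact fun ha => ⟨Or.inr ha, hq.2 ha⟩
    show ((q.1 ∪ q.2) ∩ A, (q.1 ∪ q.2) ∩ B) = q
    rw [e1, e2]
  · intro S hS
    show f S = f (S ∩ A ∪ S ∩ B)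
    rw [← Finset.inter_union_distrib_left,
      Finset.inter_eq_left.2 (Finset.mem_powerset.1 hS)]

/-- Decomposition of the Shapley value computed with the Leaf value function
`v(S) = Σ_{m ∈ C(S,x)} f_m P(X ∈ L_m | X_S ∈ L_m^S)` into a sum over the
leaves of per-leaf games on the split variables `S_m`:
`φ_{X_i} = Σ_m φ_{X_i}^m` with
`φ_{X_i}^m = (1/p) Σ_{S' ⊆ S_m\{i}} [C(p-1,|S'|)⁻¹ +
  Σ_{∅≠Z ⊆ (S_m∪{i})ᶜ} C(p-1,|Z|+|S'|)⁻¹] · f_m ·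
  [P(L_m | X_{S'∪{i}} ∈ L_m^{S'∪{i}}) - P(L_m | X_{S'} ∈ L_m^{S'})]`
(membership `m ∈ C(S,x)` is expressed by the indicator `x_S ∈ L_m^S`). -/
theorem shapley_leaf_decomposition
    {Ω : Type*} [MeasurableSpace Ω] (μ : Measure Ω) [IsProbabilityMeasure μ]
    (p M : ℕ) (X : Ω → Fin p → ℝ) (hX : Measurable X)
    (L : Fin M → Fin p → Set ℝ) (hL : ∀ m i, MeasurableSet (L m i))
    (fm : Fin M → ℝ) (Sm : Fin M → Finset (Fin p))
    (htrivial : ∀ m, ∀ j ∉ Sm m, L m j = Set.univ)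
    (x : Fin p → ℝ) (i : Fin p)
    (P : Fin M → Finset (Fin p) → ℝ)
    (hP : ∀ m S, P m S =
      (ProbabilityTheory.cond μ {ω | ∀ j ∈ S, X ω j ∈ L m j}
        {ω | ∀ j, X ω j ∈ L m j}).toReal)
    (hpos : ∀ (m : Fin M) (S : Finset (Fin p)), μ {ω | ∀ j ∈ S, X ω j ∈ L m j} ≠ 0)
    (v : Finset (Fin p) → ℝ)
    (hv : ∀ S, v S = ∑ m : Fin M, fm m *
      (if ∀ j ∈ S, x j ∈ L m j then P m S else 0)) :
    (p : ℝ)⁻¹ * ∑ S ∈ (Finset.univ.erase i).powerset,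
        (((p - 1).choose S.card : ℕ) : ℝ)⁻¹ * (v (insert i S) - v S) =
      ∑ m : Fin M, (p : ℝ)⁻¹ * ∑ S' ∈ ((Sm m).erase i).powerset,
        ((((p - 1).choose S'.card : ℕ) : ℝ)⁻¹ +
            ∑ Z ∈ (Finset.univ \ insert i (Sm m)).powerset.erase ∅,
              (((p - 1).choose (Z.card + S'.card) : ℕ) : ℝ)⁻¹) *
          (fm m *
            ((if ∀ j ∈ insert i S', x j ∈ L m j then P m (insert i S') else 0) -
              (if ∀ j ∈ S', x j ∈ L m j then P m S' else 0))) := by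
  classical
  -- Dropping coordinates with trivial constraints does not change membership conditions.
  have hiff : ∀ (m : Fin M) (S T : Finset (Fin p)), T ⊆ S →
      (∀ j ∈ S, j ∉ T → j ∉ Sm m) → ∀ y : Fin p → ℝ,
      ((∀ j ∈ S, y j ∈ L m j) ↔ (∀ j ∈ T, y j ∈ L m j)) := by
    intro m S T hT hD y
    constructor
    · exact fun hy j hj => hy j (hT hj)
    · intro hy j hj
      by_cases hjT : j ∈ T
      · exact hy j hjT
      · rw [htrivial m j (hD j hj hjT)]; trivial
  have hPeq : ∀ (m : Fin M) (S T : Finset (Fin p)), T ⊆ S →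
      (∀ j ∈ S, j ∉ T → j ∉ Sm m) → P m S = P m T := by
    intro m S T hT hD
    have hset : {ω | ∀ j ∈ S, X ω j ∈ L m j} = {ω | ∀ j ∈ T, X ω j ∈ L m j} := by
      ext ω; exact hiff m S T hT hD (X ω)
    rw [hP, hP, hset]
  -- The per-leaf summand depends only on `S ∩ Sm m`.
  have hg : ∀ (m : Fin M), ∀ S' ∈ ((Sm m).erase i).powerset,
      ∀ Z ∈ (Finset.univ \ insert i (Sm m)).powerset,
      ((if ∀ j ∈ insert i (S' ∪ Z), x j ∈ L m j then P m (insert i (S' ∪ Z)) else 0) -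
        (if ∀ j ∈ S' ∪ Z, x j ∈ L m j then P m (S' ∪ Z) else 0)) =
      ((if ∀ j ∈ insert i S', x j ∈ L m j then P m (insert i S') else 0) -
        (if ∀ j ∈ S', x j ∈ L m j then P m S' else 0)) := by
    intro m S' hS' Z hZ
    rw [Finset.mem_powerset] at hS' hZ
    have hZSm : ∀ j ∈ Z, j ∉ Sm m := by
      intro j hj hSm
      have := hZ hj
      rw [Finset.mem_sdiff] at this
      exact this.2 (Finset.mem_insert_of_mem hSm)
    have hsub1 : insert i S' ⊆ insert i (S' ∪ Z) :=
      Finset.insert_subset_insert _ Finset.subset_union_left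
    have hd1 : ∀ j ∈ insert i (S' ∪ Z), j ∉ insert i S' → j ∉ Sm m := by
      intro j hj hj'
      rcases Finset.mem_insert.1 hj with rfl | hj2
      · exact absurd (Finset.mem_insert_self _ _) hj'
      · rcases Finset.mem_union.1 hj2 with hj3 | hj3
        · exact absurd (Finset.mem_insert_of_mem hj3) hj'
        · exact hZSm j hj3
    have hsub2 : S' ⊆ S' ∪ Z := Finset.subset_union_left
    have hd2 : ∀ j ∈ S' ∪ Z, j ∉ S' → j ∉ Sm m := by
      intro j hj hj'
      rcases Finset.mem_union.1 hj with hj3 | hj3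
      · exact absurd hj3 hj'
      · exact hZSm j hj3
    rw [hPeq m _ _ hsub1 hd1, hPeq m _ _ hsub2 hd2,
      if_congr (hiff m _ _ hsub1 hd1 x) rfl rfl,
      if_congr (hiff m _ _ hsub2 hd2 x) rfl rfl]
  -- Expand `v` and swap the sums.
  have hexp : ∀ S ∈ (Finset.univ.erase i).powerset,
      (((p - 1).choose S.card : ℕ) : ℝ)⁻¹ * (v (insert i S) - v S) =
      ∑ m : Fin M, (((p - 1).choose S.card : ℕ) : ℝ)⁻¹ * (fm m *
        ((if ∀ j ∈ insert i S, x j ∈ L m j then P m (insert i S) else 0) -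
          (if ∀ j ∈ S, x j ∈ L m j then P m S else 0))) := by
    intro S _
    rw [hv, hv, ← Finset.sum_sub_distrib, Finset.mul_sum]
    exact Finset.sum_congr rfl fun m _ => by ring
  rw [Finset.sum_congr rfl hexp, Finset.sum_comm, Finset.mul_sum]
  refine Finset.sum_congr rfl fun m _ => ?_
  congr 1
  -- Split `univ.erase i` into the split variables and the rest.
  have hU : (Finset.univ.erase i : Finset (Fin p)) =
      ((Sm m).erase i) ∪ (Finset.univ \ insert i (Sm m)) := by
    ext j
    simp only [Finset.mem_erase, Finset.mem_union, Finset.mem_sdiff, Finset.mem_univ,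
      Finset.mem_insert, true_and, and_true, not_or]
    by_cases hjS : j ∈ Sm m <;> by_cases hji : j = i <;> simp [hjS, hji]
  have hdisj : Disjoint ((Sm m).erase i) (Finset.univ \ insert i (Sm m)) := by
    rw [Finset.disjoint_left]
    intro j hj hj'
    rw [Finset.mem_sdiff] at hj'
    exact hj'.2 (Finset.mem_insert_of_mem (Finset.mem_of_mem_erase hj))
  rw [hU, sum_powerset_union_disjoint hdisj]
  refine Finset.sum_congr rfl fun S' hS' => ?_
  have hinner : ∀ Z ∈ (Finset.univ \ insert i (Sm m)).powerset,
      (((p - 1).choose (S' ∪ Z).card : ℕ) : ℝ)⁻¹ * (fm m *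
        ((if ∀ j ∈ insert i (S' ∪ Z), x j ∈ L m j then P m (insert i (S' ∪ Z)) else 0) -
          (if ∀ j ∈ S' ∪ Z, x j ∈ L m j then P m (S' ∪ Z) else 0))) =
      (((p - 1).choose (Z.card + S'.card) : ℕ) : ℝ)⁻¹ * (fm m *
        ((if ∀ j ∈ insert i S', x j ∈ L m j then P m (insert i S') else 0) -
          (if ∀ j ∈ S', x j ∈ L m j then P m S' else 0))) := by
    intro Z hZ
    have hdZ : Disjoint S' Z :=
      hdisj.mono (Finset.mem_powerset.1 hS') (Finset.mem_powerset.1 hZ)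
    rw [hg m S' hS' Z hZ, Finset.card_union_of_disjoint hdZ, add_comm S'.card Z.card]
  rw [Finset.sum_congr rfl hinner, ← Finset.sum_mul]
  congr 1
  rw [← Finset.add_sum_erase _ _ (Finset.mem_powerset.2 (Finset.empty_subset _))]
  simp
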